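/- Let μ₀, μ₁ be probability measures on a measurable space with μ₁ absolutely continuous with respect to μ₀, and let h be a measurable function such that e^h is μ₀-integrable and h is μ₁-integrable. Then ∫h dμ₁ ≤ ln(∫e^h dμ₀) + K(μ₁|μ₀), where K(μ₁|μ₀) = ∫ ln(dμ₁/dμ₀) dμ₁ is the Kullback–Leibler divergence. -/

import Mathlib

open MeasureTheory

open Real in
lemma integral_llr_nonneg' {Θ : Type*} [MeasurableSpace Θ] {μ ν : Measure Θ}
    [IsProbabilityMeasure μ] [IsProbabilityMeasure ν] (hμν : μ ≪ ν)
    (h_int : Integrable (llr μ ν) μ) : 0 ≤ ∫ x, llr μ ν x ∂μ := by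
  have h_int' : Integrable (llr ν μ) μ :=
    (integrable_congr (neg_llr hμν)).mp h_int.neg
  have h_le : ∫ x, llr ν μ x ∂μ ≤ 0 := by
    have hmono : ∫ x, llr ν μ x ∂μ ≤ ∫ x, ((ν.rnDeriv μ x).toReal - 1) ∂μ := by
      refine integral_mono_ae h_int'
        ((Measure.integrable_toReal_rnDeriv).sub (integrable_const 1)) ?_
      filter_upwards [Measure.rnDeriv_pos' hμν, Measure.rnDeriv_lt_top ν μ] with x hx hx'
      exact Real.log_le_sub_one_of_pos (ENNReal.toReal_pos hx.ne' hx'.ne)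
    have h2 : ∫ x, ((ν.rnDeriv μ x).toReal - 1) ∂μ ≤ 0 := by
      rw [integral_sub Measure.integrable_toReal_rnDeriv (integrable_const 1)]
      simp only [integral_const, measureReal_def, measure_univ, ENNReal.toReal_one, smul_eq_mul, one_mul]
      have h3 := Measure.integral_toReal_rnDeriv' (μ := ν) (ν := μ)
      simp only [measureReal_def, measure_univ, ENNReal.toReal_one] at h3
      have h4 : 0 ≤ ((ν.singularPart μ) Set.univ).toReal := ENNReal.toReal_nonneg
      linarith
    linarith
  have heq : ∫ x, llr ν μ x ∂μ = - ∫ x, llr μ ν x ∂μ := by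
    rw [← integral_neg, ← integral_congr_ae (neg_llr hμν)]
    rfl
  linarith [heq ▸ h_le]

/-- Donsker–Varadhan variational principle: `∫ h dμ₁ ≤ ln ∫ e^h dμ₀ + K(μ₁|μ₀)`, where
`K(μ₁|μ₀) = ∫ ln(dμ₁/dμ₀) dμ₁` is the Kullback–Leibler divergence. -/
theorem entropy_variational_bound {Θ : Type*} [MeasurableSpace Θ]
    (μ₀ μ₁ : Measure Θ) [IsProbabilityMeasure μ₀] [IsProbabilityMeasure μ₁]
    (hac : μ₁ ≪ μ₀) (h : Θ → ℝ) (hmeas : Measurable h)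
    (hexp : Integrable (fun θ => Real.exp (h θ)) μ₀)
    (hint : Integrable h μ₁)
    (hKL : Integrable (fun θ => Real.log ((μ₁.rnDeriv μ₀ θ).toReal)) μ₁) :
    ∫ θ, h θ ∂μ₁ ≤ Real.log (∫ θ, Real.exp (h θ) ∂μ₀)
      + ∫ θ, Real.log ((μ₁.rnDeriv μ₀ θ).toReal) ∂μ₁ := by
  have hKL' : Integrable (llr μ₁ μ₀) μ₁ := hKL
  have hac' : μ₁ ≪ μ₀.tilted h := hac.trans (absolutelyContinuous_tilted hexp)
  haveI : IsProbabilityMeasure (μ₀.tilted h) := isProbabilityMeasure_tilted hexp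
  have h_int' : Integrable (llr μ₁ (μ₀.tilted h)) μ₁ :=
    integrable_llr_tilted_right hac hint hKL' hexp
  have h_eq := integral_llr_tilted_right hac hint hexp hKL'
  have h_nonneg := integral_llr_nonneg' hac' h_int'
  rw [h_eq] at h_nonneg
  have : ∫ θ, llr μ₁ μ₀ θ ∂μ₁ = ∫ θ, Real.log ((μ₁.rnDeriv μ₀ θ).toReal) ∂μ₁ := rfl
  linarith [this ▸ h_nonneg]
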